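/- For all integers m ≥ 0, n ≥ 2 and s with 3 ≤ s ≤ n − 1, the complete-graph-structure connectivity of the DCell network satisfies κ(D_{m,n}; K_s) = ⌈(n−1)/s⌉ + m. -/

import Mathlib

open SimpleGraph

/-! ## Structure connectivity -/

/-- The set of vertices covered by a family of subgraphs of `G`. -/
def SimpleGraph.cutVerts {V : Type*} {G : SimpleGraph V} (F : Finset G.Subgraph) : Set V :=
  ⋃ A ∈ F, A.verts

/-- A family `F` of subgraphs of `G` is a subgraph cut if deleting all vertices of members of `F`
leaves a graph that is disconnected or has at most one vertex. -/
def SimpleGraph.IsSubgraphCut {V : Type*} (G : SimpleGraph V) (F : Finset G.Subgraph) : Prop :=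
  ¬ (G.induce (SimpleGraph.cutVerts F)ᶜ).Connected ∨ ((SimpleGraph.cutVerts F)ᶜ : Set V).Subsingleton

/-- An `H`-structure cut of `G`: a subgraph cut all of whose members are isomorphic to `H`. -/
def SimpleGraph.IsStructureCut {V W : Type*} (G : SimpleGraph V) (H : SimpleGraph W)
    (F : Finset G.Subgraph) : Prop :=
  G.IsSubgraphCut F ∧ ∀ A ∈ F, Nonempty (A.coe ≃g H)

/-- An `H`-substructure cut of `G`: a subgraph cut all of whose members are isomorphic to a
connected subgraph of `H`. -/
def SimpleGraph.IsSubstructureCut {V W : Type*} (G : SimpleGraph V) (H : SimpleGraph W)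
    (F : Finset G.Subgraph) : Prop :=
  G.IsSubgraphCut F ∧ ∀ A ∈ F, ∃ K : H.Subgraph, K.Connected ∧ Nonempty (A.coe ≃g K.coe)

/-- The `H`-structure connectivity `κ(G; H)`. -/
noncomputable def SimpleGraph.structConn {V W : Type*} (G : SimpleGraph V) (H : SimpleGraph W) : ℕ :=
  sInf {k | ∃ F : Finset G.Subgraph, G.IsStructureCut H F ∧ F.card = k}

/-- The `H`-substructure connectivity `κˢ(G; H)`. -/
noncomputable def SimpleGraph.substructConn {V W : Type*} (G : SimpleGraph V) (H : SimpleGraph W) : ℕ :=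
  sInf {k | ∃ F : Finset G.Subgraph, G.IsSubstructureCut H F ∧ F.card = k}

/-- The star `K_{1,t}` with center `0` and `t` leaves. -/
def starGraph (t : ℕ) : SimpleGraph (Fin (t + 1)) :=
  SimpleGraph.fromRel (fun i _ => i = 0)
/-! ## The DCell network -/

/-- `tcell n m` is the number of servers of the `m`-dimensional DCell with `n`-port switches. -/
def tcell (n : ℕ) : ℕ → ℕ
  | 0 => n
  | m + 1 => tcell n m * (tcell n m + 1)

/-- Vertices (labels `x_m x_{m-1} … x_0`) of the `m`-dimensional DCell with `n`-port switches. -/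
def DCellVertex (n : ℕ) : ℕ → Type
  | 0 => Fin n
  | m + 1 => Fin (tcell n m + 1) × DCellVertex n m

/-- The numerical identifier `x_0 + Σ_{j=1}^{m} x_j · t_{j-1,n}` of a vertex of `D_{m,n}`. -/
def DCellCode (n : ℕ) : (m : ℕ) → DCellVertex n m → ℕ
  | 0, x => Fin.val x
  | m + 1, x => DCellCode n m x.2 + (Fin.val x.1) * tcell n m

/-- The `m`-dimensional DCell with `n`-port switches `D_{m,n}`. -/
def DCell (n : ℕ) : (m : ℕ) → SimpleGraph (DCellVertex n m)
  | 0 => (⊤ : SimpleGraph (Fin n))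
  | m + 1 => SimpleGraph.fromRel (fun u v =>
      (u.1 = v.1 ∧ (DCell n m).Adj u.2 v.2) ∨
      ((u.1 : ℕ) < (v.1 : ℕ) ∧ (u.1 : ℕ) = DCellCode n m v.2 ∧
        (v.1 : ℕ) = DCellCode n m u.2 + 1))

section Basics

variable {n : ℕ}

lemma tcell_pos (hn : 0 < n) : ∀ m, 0 < tcell n m
  | 0 => hn
  | m + 1 => by
    have := tcell_pos hn m
    simp only [tcell]; positivity

lemma n_le_tcell (hn : 0 < n) : ∀ m, n ≤ tcell n m
  | 0 => le_refl n
  | m + 1 => by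
    have h := n_le_tcell hn m
    calc n ≤ tcell n m := h
    _ ≤ tcell n m * (tcell n m + 1) := Nat.le_mul_of_pos_right _ (by omega)
    _ = tcell n (m+1) := rfl

instance instDecEqDCV : ∀ m, DecidableEq (DCellVertex n m)
  | 0 => inferInstanceAs (DecidableEq (Fin n))
  | m + 1 => @instDecidableEqProd _ _ _ (instDecEqDCV m)

instance instFintypeDCV : ∀ m, Fintype (DCellVertex n m)
  | 0 => inferInstanceAs (Fintype (Fin n))
  | m + 1 => @instFintypeProd _ _ _ (instFintypeDCV m)

lemma card_DCV : ∀ m, Fintype.card (DCellVertex n m) = tcell n m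
  | 0 => by simp [DCellVertex, tcell]; exact Fintype.card_fin n
  | m + 1 => by
    have ih := card_DCV m
    show Fintype.card (Fin (tcell n m + 1) × DCellVertex n m) = tcell n m * (tcell n m + 1)
    rw [Fintype.card_prod, ih, Fintype.card_fin]
    ring

def dcvZero (hn : 0 < n) : ∀ m, DCellVertex n m
  | 0 => ⟨0, hn⟩
  | m + 1 => (⟨0, by omega⟩, dcvZero hn m)

lemma code_lt (hn : 0 < n) : ∀ m (x : DCellVertex n m), DCellCode n m x < tcell n m
  | 0, x => x.2
  | m + 1, x => by
    have h1 := code_lt hn m x.2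
    have h2 : (x.1 : ℕ) ≤ tcell n m := Nat.lt_succ_iff.mp x.1.2
    show DCellCode n m x.2 + (x.1 : ℕ) * tcell n m < tcell n m * (tcell n m + 1)
    nlinarith

lemma code_inj : ∀ m (x y : DCellVertex n m), (hn : 0 < n) →
    DCellCode n m x = DCellCode n m y → x = y
  | 0, x, y, hn, h => Fin.ext h
  | m + 1, x, y, hn, h => by
    have hx := code_lt hn m x.2
    have hy := code_lt hn m y.2
    have ht := tcell_pos hn m
    show x = y
    have h' : DCellCode n m x.2 + (x.1 : ℕ) * tcell n m
        = DCellCode n m y.2 + (y.1 : ℕ) * tcell n m := h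
    have h1 : (x.1 : ℕ) = (y.1 : ℕ) := by
      rcases Nat.lt_trichotomy (x.1 : ℕ) (y.1 : ℕ) with hlt | he | hlt
      · nlinarith
      · exact he
      · nlinarith
    have h2 : DCellCode n m x.2 = DCellCode n m y.2 := by
      rw [h1] at h'; omega
    have := code_inj m x.2 y.2 hn h2
    exact Prod.ext (Fin.ext h1) this

def decode (hn : 0 < n) : ∀ m, ℕ → DCellVertex n m
  | 0, c => ⟨c % n, Nat.mod_lt _ hn⟩
  | m + 1, c => (⟨c / tcell n m % (tcell n m + 1), Nat.mod_lt _ (by omega)⟩,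
      decode hn m (c % tcell n m))

lemma code_decode (hn : 0 < n) : ∀ m (c : ℕ), c < tcell n m →
    DCellCode n m (decode hn m c) = c
  | 0, c, hc => by
    have hc' : c < n := hc
    show ((⟨c % n, _⟩ : Fin n) : ℕ) = c
    simp [Nat.mod_eq_of_lt hc']
  | m + 1, c, hc => by
    have ht := tcell_pos hn m
    have h1 : c % tcell n m < tcell n m := Nat.mod_lt _ ht
    have h2 : c / tcell n m < tcell n m + 1 := by
      have : c < tcell n m * (tcell n m + 1) := hc
      exact Nat.div_lt_of_lt_mul (by linarith [this])
    show DCellCode n m (decode hn m (c % tcell n m))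
        + (c / tcell n m % (tcell n m + 1)) * tcell n m = c
    rw [code_decode hn m _ h1, Nat.mod_eq_of_lt h2]
    rw [Nat.mod_add_div' c (tcell n m)]

end Basics
section Adjacency

variable {n : ℕ}

lemma dcell_succ_adj {m : ℕ} {u v : DCellVertex n (m+1)} :
    (DCell n (m+1)).Adj u v ↔ u ≠ v ∧
      (((u.1 = v.1 ∧ (DCell n m).Adj u.2 v.2) ∨
      ((u.1 : ℕ) < (v.1 : ℕ) ∧ (u.1 : ℕ) = DCellCode n m v.2 ∧
        (v.1 : ℕ) = DCellCode n m u.2 + 1)) ∨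
      ((v.1 = u.1 ∧ (DCell n m).Adj v.2 u.2) ∨
      ((v.1 : ℕ) < (u.1 : ℕ) ∧ (v.1 : ℕ) = DCellCode n m u.2 ∧
        (u.1 : ℕ) = DCellCode n m v.2 + 1))) := by
  show (SimpleGraph.fromRel _).Adj u v ↔ _
  rw [SimpleGraph.fromRel_adj]

lemma adj_same_cell {m : ℕ} {i : Fin (tcell n m + 1)} {x y : DCellVertex n m} :
    (DCell n (m+1)).Adj (i, x) (i, y) ↔ (DCell n m).Adj x y := by
  refine Iff.trans dcell_succ_adj ?_
  constructor
  · rintro ⟨hne, (⟨-, h⟩ | ⟨h, -⟩) | (⟨-, h⟩ | ⟨h, -⟩)⟩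
    · exact h
    · simp at h
    · exact h.symm
    · simp at h
  · intro h
    refine ⟨?_, Or.inl (Or.inl ⟨rfl, h⟩)⟩
    intro he
    exact h.ne (congrArg Prod.snd he)

/-- The unique cross neighbour of a vertex at the top level. -/
def partner (hn : 0 < n) {m : ℕ} (u : DCellVertex n (m+1)) : DCellVertex n (m+1) :=
  if h : (u.1 : ℕ) ≤ DCellCode n m u.2 then
    (⟨DCellCode n m u.2 + 1, by have := code_lt hn m u.2; omega⟩, decode hn m (u.1 : ℕ))
  else
    (⟨DCellCode n m u.2, by have := code_lt hn m u.2; omega⟩, decode hn m ((u.1 : ℕ) - 1))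

variable (hn : 0 < n)

lemma partner_pos {m : ℕ} (u : DCellVertex n (m+1)) (h : (u.1 : ℕ) ≤ DCellCode n m u.2) :
    partner hn u = (⟨DCellCode n m u.2 + 1, by have := code_lt hn m u.2; omega⟩,
      decode hn m (u.1 : ℕ)) := by
  unfold partner; exact dif_pos h

lemma partner_neg {m : ℕ} (u : DCellVertex n (m+1)) (h : ¬ (u.1 : ℕ) ≤ DCellCode n m u.2) :
    partner hn u = (⟨DCellCode n m u.2, by have := code_lt hn m u.2; omega⟩,
      decode hn m ((u.1 : ℕ) - 1)) := by
  unfold partner; exact dif_neg h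

lemma partner_fst_ne {m : ℕ} (u : DCellVertex n (m+1)) : (partner hn u).1 ≠ u.1 := by
  by_cases h : (u.1 : ℕ) ≤ DCellCode n m u.2
  · rw [partner_pos hn u h]
    intro he
    have : DCellCode n m u.2 + 1 = (u.1 : ℕ) := congrArg Fin.val he
    omega
  · rw [partner_neg hn u h]
    intro he
    have : DCellCode n m u.2 = (u.1 : ℕ) := congrArg Fin.val he
    omega

lemma adj_partner {m : ℕ} (u : DCellVertex n (m+1)) :
    (DCell n (m+1)).Adj u (partner hn u) := by
  have hcl := code_lt hn m u.2
  rw [dcell_succ_adj]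
  constructor
  · intro he
    exact partner_fst_ne hn u (congrArg Prod.fst he.symm)
  · by_cases h : (u.1 : ℕ) ≤ DCellCode n m u.2 <;>
      [rw [partner_pos hn u h]; rw [partner_neg hn u h]]
    · refine Or.inl (Or.inr ⟨by simpa using by omega, ?_, rfl⟩)
      show (u.1 : ℕ) = DCellCode n m (decode hn m (u.1 : ℕ))
      rw [code_decode hn m _ (by omega)]
    · refine Or.inr (Or.inr ⟨by simpa using by omega, rfl, ?_⟩)
      show (u.1 : ℕ) = DCellCode n m (decode hn m ((u.1 : ℕ) - 1)) + 1
      rw [code_decode hn m _ (by omega)]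
      omega

lemma cross_eq_partner {m : ℕ} {u v : DCellVertex n (m+1)}
    (hadj : (DCell n (m+1)).Adj u v) (hne : v.1 ≠ u.1) : v = partner hn u := by
  have hcl := code_lt hn m u.2
  have hclv := code_lt hn m v.2
  rw [dcell_succ_adj] at hadj
  obtain ⟨-, (⟨he, -⟩ | ⟨h1, h2, h3⟩) | (⟨he, -⟩ | ⟨h1, h2, h3⟩)⟩ := hadj
  · exact absurd he.symm hne
  · -- u.1 < v.1, u.1 = code v.2, v.1 = code u.2 + 1
    have hb : (u.1 : ℕ) ≤ DCellCode n m u.2 := by omega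
    rw [partner_pos hn u hb]
    refine Prod.ext (Fin.ext (by simpa using h3)) ?_
    show v.2 = decode hn m (u.1 : ℕ)
    refine code_inj m _ _ hn ?_
    rw [code_decode hn m _ (by omega)]
    exact h2.symm
  · exact absurd he hne
  · -- v.1 < u.1, v.1 = code u.2, u.1 = code v.2 + 1
    have hb : ¬ ((u.1 : ℕ) ≤ DCellCode n m u.2) := by omega
    rw [partner_neg hn u hb]
    refine Prod.ext (Fin.ext (by simpa using h2)) ?_
    show v.2 = decode hn m ((u.1 : ℕ) - 1)
    refine code_inj m _ _ hn ?_
    rw [code_decode hn m _ (by omega)]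
    omega

lemma partner_cell_injOn {m : ℕ} (i : Fin (tcell n m + 1)) {x y : DCellVertex n m}
    (h : (partner hn (i, x)).1 = (partner hn (i, y)).1) : x = y := by
  have hx := code_lt hn m x
  have hy := code_lt hn m y
  by_cases h1 : (i : ℕ) ≤ DCellCode n m x <;> by_cases h2 : (i : ℕ) ≤ DCellCode n m y <;>
    [rw [partner_pos hn (i, x) h1, partner_pos hn (i, y) h2] at h;
     rw [partner_pos hn (i, x) h1, partner_neg hn (i, y) h2] at h;
     rw [partner_neg hn (i, x) h1, partner_pos hn (i, y) h2] at h;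
     rw [partner_neg hn (i, x) h1, partner_neg hn (i, y) h2] at h] <;>
    · have hval := congrArg Fin.val h
      simp only at hval
      exact code_inj m x y hn (by omega)

lemma exists_cross_adj {m : ℕ} {i j : Fin (tcell n m + 1)} (hij : (i : ℕ) < (j : ℕ)) :
    ∃ x y : DCellVertex n m, (DCell n (m+1)).Adj (i, x) (j, y)
      ∧ (partner hn (i, x)) = (j, y) := by
  have htp := tcell_pos hn m
  refine ⟨decode hn m ((j : ℕ) - 1), decode hn m (i : ℕ), ?_⟩
  have hj1 : (j : ℕ) - 1 < tcell n m := by have := j.2; omega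
  have hcx : DCellCode n m (decode hn m ((j : ℕ) - 1)) = (j : ℕ) - 1 :=
    code_decode hn m _ hj1
  have hb : ((i : ℕ)) ≤ DCellCode n m (decode hn m ((j : ℕ) - 1)) := by omega
  have hpe : partner hn ((i, decode hn m ((j : ℕ) - 1)) : DCellVertex n (m+1))
      = (j, decode hn m (i : ℕ)) := by
    rw [partner_pos hn ((i, decode hn m ((j : ℕ) - 1)) : DCellVertex n (m+1)) hb]
    exact Prod.ext (Fin.ext (by simp [hcx]; omega)) rfl
  refine ⟨?_, hpe⟩
  have := adj_partner hn ((i, decode hn m ((j : ℕ) - 1)) : DCellVertex n (m+1))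
  rwa [hpe] at this

lemma clique_fst_eq (hn : 0 < n) {m : ℕ} {S : Finset (DCellVertex n (m+1))} (hs : 3 ≤ S.card)
    (hcl : ∀ a ∈ S, ∀ b ∈ S, a ≠ b → (DCell n (m+1)).Adj a b) :
    ∀ a ∈ S, ∀ b ∈ S, a.1 = b.1 := by
  intro a ha b hb
  by_contra hab
  have hane : a ≠ b := fun h => hab (congrArg Prod.fst h)
  have : ∃ w ∈ S, w ≠ a ∧ w ≠ b := by
    have h1 : 1 ≤ ((S.erase a).erase b).card := by
      have := Finset.card_erase_le (s := S.erase a) (a := b)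
      have h2 := Finset.card_erase_of_mem ha
      have h3 := Finset.card_erase_le (s := S.erase a) (a := b)
      have h4 : (S.erase a).card = S.card - 1 := Finset.card_erase_of_mem ha
      have h5 : ((S.erase a).erase b).card ≥ (S.erase a).card - 1 :=
        Finset.pred_card_le_card_erase
      omega
    obtain ⟨w, hw⟩ := Finset.card_pos.mp (show 0 < ((S.erase a).erase b).card by omega)
    exact ⟨w, Finset.mem_of_mem_erase (Finset.mem_of_mem_erase hw),
      fun h => (Finset.mem_erase.mp (Finset.mem_of_mem_erase hw)).1 (h ▸ rfl) |>.elim,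
      fun h => ((Finset.mem_erase.mp hw).1 (by rw [h])).elim⟩
  obtain ⟨w, hwS, hwa, hwb⟩ := this
  by_cases hw : w.1 = a.1
  · have h1 : a = partner hn b := cross_eq_partner hn (hcl b hb a ha hane.symm) hab
    have h2 : w = partner hn b := cross_eq_partner hn (hcl b hb w hwS hwb.symm)
      (by rw [hw]; exact hab)
    exact hwa (h2.trans h1.symm)
  · have h1 : b = partner hn a := cross_eq_partner hn (hcl a ha b hb hane) (Ne.symm hab)
    have h2 : w = partner hn a := cross_eq_partner hn (hcl a ha w hwS hwa.symm) hw
    exact hwb (h2.trans h1.symm)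

end Adjacency
section Numeric

variable {n s : ℕ}

lemma c_pos (hn : 2 ≤ n) (hs : 1 ≤ s) : 1 ≤ (n + s - 2) / s :=
  (Nat.one_le_div_iff (by omega)).mpr (by omega)

lemma key0 (hs : 1 ≤ s) : s * ((n + s - 2) / s) ≤ n + s - 2 := by
  have := Nat.div_mul_le_self (n + s - 2) s
  calc s * ((n + s - 2) / s) = (n + s - 2) / s * s := by ring
  _ ≤ n + s - 2 := this

lemma sc_ge (hn : 2 ≤ n) (hs : 1 ≤ s) : n - 1 ≤ s * ((n + s - 2) / s) := by
  have h1 := Nat.div_add_mod (n + s - 2) s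
  have h2 : (n + s - 2) % s < s := Nat.mod_lt _ (by omega)
  have h3 : s * ((n + s - 2) / s) + (n + s - 2) % s = n + s - 2 := h1
  omega

lemma keym (hn : 2 ≤ n) (hs1 : 1 ≤ s) (hs2 : s + 1 ≤ n) :
    ∀ m, s * ((n + s - 2) / s + m) + 2 ≤ tcell n m + s
  | 0 => by
    have := key0 (n := n) hs1
    show s * ((n + s - 2) / s + 0) + 2 ≤ n + s
    simp only [Nat.add_zero]
    omega
  | m + 1 => by
    have ih := keym hn hs1 hs2 m
    have h1 : n ≤ tcell n m := n_le_tcell (by omega) m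
    have h2 : tcell n m * 2 ≤ tcell n m * (tcell n m + 1) :=
      Nat.mul_le_mul_left _ (by omega)
    have h3 : s * ((n + s - 2) / s + (m + 1)) = s * ((n + s - 2) / s + m) + s := by ring
    show s * ((n + s - 2) / s + (m + 1)) + 2 ≤ tcell n m * (tcell n m + 1) + s
    omega

lemma aux_mul_mono {a A t : ℕ} (hs : 1 ≤ t) (h : a ≤ A) : t * a + A ≤ t * A + a := by
  obtain ⟨d, rfl⟩ := Nat.le.dest h
  rw [Nat.mul_add]
  have : d ≤ t * d := Nat.le_mul_of_pos_left d (by omega)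
  omega

end Numeric
section MainConn

variable {n s : ℕ}

lemma main_conn (hn : 4 ≤ n) (hs1 : 3 ≤ s) (hs2 : s + 1 ≤ n) :
    ∀ (m : ℕ) (L : Finset (Finset (DCellVertex n m))),
    (∀ S ∈ L, S.card = s ∧ ∀ a ∈ S, ∀ b ∈ S, a ≠ b → (DCell n m).Adj a b) →
    L.card + 1 ≤ (n + s - 2) / s + m →
    ((DCell n m).induce {v | ∀ S ∈ L, v ∉ S}).Connected ∧
      ∃ a b : DCellVertex n m, (∀ S ∈ L, a ∉ S) ∧ (∀ S ∈ L, b ∉ S) ∧ a ≠ b := by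
  have hn0 : 0 < n := by omega
  intro m
  induction m with
  | zero =>
    intro L hL hk
    -- counting
    have hcard : ∀ S ∈ L, S.card = s := fun S hS => (hL S hS).1
    set RF : Finset (DCellVertex n 0) := L.biUnion id with hRFdef
    have hRF : RF.card ≤ s * L.card := by
      calc RF.card ≤ ∑ S ∈ L, (id S).card := Finset.card_biUnion_le
      _ = ∑ S ∈ L, s := Finset.sum_congr rfl (fun S hS => by simp [hcard S hS])
      _ = L.card * s := by rw [Finset.sum_const, smul_eq_mul]
      _ = s * L.card := by ring
    have hmul : s * (L.card + 1) ≤ s * ((n + s - 2) / s) :=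
      Nat.mul_le_mul_left _ (by simpa using hk)
    have hmul' : s * L.card + s ≤ s * ((n + s - 2) / s) := by
      rw [Nat.mul_add, Nat.mul_one] at hmul; exact hmul
    have hk0 := key0 (n := n) (s := s) (by omega)
    have hRF2 : RF.card + 2 ≤ n := by omega
    set Rcf : Finset (DCellVertex n 0) := Finset.univ \ RF with hRcdef
    have hmem : ∀ u : DCellVertex n 0, u ∈ Rcf ↔ ∀ S ∈ L, u ∉ S := by
      intro u
      simp [hRcdef, hRFdef, Finset.mem_sdiff, Finset.mem_biUnion]
    have hRcard : 2 ≤ Rcf.card := by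
      have h1 : Rcf.card = Fintype.card (DCellVertex n 0) - RF.card :=
        by rw [hRcdef, Finset.card_sdiff_of_subset (Finset.subset_univ _), Finset.card_univ]
      rw [card_DCV 0] at h1
      show 2 ≤ Rcf.card
      have : tcell n 0 = n := rfl
      omega
    obtain ⟨a, ha, b, hb, hab⟩ := Finset.one_lt_card.mp (show 1 < Rcf.card by omega)
    refine ⟨?_, a, b, (hmem a).mp ha, (hmem b).mp hb, hab⟩
    rw [SimpleGraph.connected_iff]
    constructor
    · rintro ⟨u, hu⟩ ⟨v, hv⟩
      rcases eq_or_ne (⟨u, hu⟩ : {v : DCellVertex n 0 | ∀ S ∈ L, v ∉ S})  ⟨v, hv⟩ with he | hne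
      · rw [he]
      · refine SimpleGraph.Adj.reachable ?_
        show (⊤ : SimpleGraph (Fin n)).Adj u v
        show u ≠ v
        exact fun h => hne (Subtype.ext h)
    · exact ⟨⟨a, (hmem a).mp ha⟩⟩
  | succ m ih =>
    intro L hL hk
    classical
    have hc1 : 1 ≤ (n + s - 2) / s := c_pos (by omega) (by omega)
    have htp : 0 < tcell n m := tcell_pos hn0 m
    have hLne : ∀ S ∈ L, S.Nonempty := fun S hS =>
      Finset.card_pos.mp (by rw [(hL S hS).1]; omega)
    set cell : Finset (DCellVertex n (m+1)) → Fin (tcell n m + 1) :=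
      fun S => if h : S.Nonempty then h.choose.1 else ⟨0, by omega⟩ with hcelldef
    have hcellmem : ∀ S ∈ L, ∀ u ∈ S, u.1 = cell S := by
      intro S hS u hu
      have hfst := clique_fst_eq hn0 (by rw [(hL S hS).1]; omega) (hL S hS).2
      rw [hcelldef]; dsimp only
      rw [dif_pos (hLne S hS)]
      exact hfst u hu _ (hLne S hS).choose_spec
    set Li : Fin (tcell n m + 1) → Finset (Finset (DCellVertex n (m+1))) :=
      fun i => L.filter (fun S => cell S = i) with hLidef
    set proj : Finset (DCellVertex n (m+1)) → Finset (DCellVertex n m) :=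
      fun S => S.image Prod.snd with hprojdef
    set Lp : Fin (tcell n m + 1) → Finset (Finset (DCellVertex n m)) :=
      fun i => (Li i).image proj with hLpdef
    set Dc : Finset (Fin (tcell n m + 1)) := L.image cell with hDcdef
    set Rc : Set (DCellVertex n (m+1)) := {v | ∀ S ∈ L, v ∉ S} with hRcdef
    set Gi := (DCell n (m+1)).induce Rc with hGidef
    -- membership lemmas
    have hF2 : ∀ (i : Fin (tcell n m + 1)) (S : Finset (DCellVertex n (m+1))), S ∈ Li i →
        ∀ x : DCellVertex n m, (((i, x) : DCellVertex n (m+1)) ∈ S ↔ x ∈ proj S) := by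
      intro i S hS x
      have hSL : S ∈ L := (Finset.mem_filter.mp hS).1
      have hSc : cell S = i := (Finset.mem_filter.mp hS).2
      constructor
      · intro h; exact Finset.mem_image_of_mem Prod.snd h
      · intro h
        obtain ⟨u, hu, hux⟩ := Finset.mem_image.mp h
        have h1 : u.1 = i := by rw [hcellmem S hSL u hu, hSc]
        have : u = ((i, x) : DCellVertex n (m+1)) := Prod.ext h1 hux
        rwa [this] at hu
    have hF3 : ∀ (i : Fin (tcell n m + 1)) (T : Finset (DCellVertex n m)), T ∈ Lp i →
        T.card = s ∧ ∀ a ∈ T, ∀ b ∈ T, a ≠ b → (DCell n m).Adj a b := by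
      intro i T hT
      obtain ⟨S, hS, rfl⟩ := Finset.mem_image.mp hT
      have hSL : S ∈ L := (Finset.mem_filter.mp hS).1
      have hSc : cell S = i := (Finset.mem_filter.mp hS).2
      constructor
      · rw [hprojdef]
        dsimp only
        refine (Finset.card_image_of_injOn ?_).trans (hL S hSL).1
        intro u hu v hv huv
        refine Prod.ext ?_ huv
        rw [hcellmem S hSL u hu, hcellmem S hSL v hv]
      · intro a ha b hb hab
        have ha' : ((i, a) : DCellVertex n (m+1)) ∈ S := (hF2 i S hS a).mpr ha
        have hb' : ((i, b) : DCellVertex n (m+1)) ∈ S := (hF2 i S hS b).mpr hb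
        have hne : ((i, a) : DCellVertex n (m+1)) ≠ (i, b) := by
          intro h; exact hab (congrArg Prod.snd h)
        exact adj_same_cell.mp ((hL S hSL).2 _ ha' _ hb' hne)
    have hF6 : ∀ (j : Fin (tcell n m + 1)) (y : DCellVertex n m), j ∉ Dc →
        ((j, y) : DCellVertex n (m+1)) ∈ Rc := by
      intro j y hj S hS hmem
      exact hj (by
        rw [hDcdef]
        have : cell S = j := (hcellmem S hS _ hmem).symm
        rw [← this]
        exact Finset.mem_image_of_mem cell hS)
    have hF7 : ∀ (i : Fin (tcell n m + 1)) (x : DCellVertex n m),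
        (((i, x) : DCellVertex n (m+1)) ∈ Rc ↔ ∀ T ∈ Lp i, x ∉ T) := by
      intro i x
      constructor
      · intro h T hT hx
        obtain ⟨S, hS, rfl⟩ := Finset.mem_image.mp hT
        exact h S (Finset.mem_filter.mp hS).1 ((hF2 i S hS x).mpr hx)
      · intro h S hS hmem
        have hSc : cell S = i := (hcellmem S hS _ hmem).symm
        have hSLi : S ∈ Li i := Finset.mem_filter.mpr ⟨hS, hSc⟩
        exact h (proj S) (Finset.mem_image_of_mem proj hSLi) ((hF2 i S hSLi x).mp hmem)
    -- reachability within a cell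
    have H1 : ∀ (i : Fin (tcell n m + 1)), (Li i).card + 1 ≤ (n + s - 2) / s + m →
        ∀ (x y : DCellVertex n m) (hx : ((i, x) : DCellVertex n (m+1)) ∈ Rc)
          (hy : ((i, y) : DCellVertex n (m+1)) ∈ Rc),
        Gi.Reachable ⟨(i, x), hx⟩ ⟨(i, y), hy⟩ := by
      intro i hsmall x y hx hy
      have hcard : (Lp i).card + 1 ≤ (n + s - 2) / s + m := by
        have h' : (Lp i).card ≤ (Li i).card := Finset.card_image_le
        omega
      have hihc := ih (Lp i) (hF3 i) hcard
      set f : ((DCell n m).induce {x | ∀ T ∈ Lp i, x ∉ T}) →g Gi :=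
        ⟨fun p => ⟨(i, p.val), (hF7 i p.val).mpr p.prop⟩,
         fun {p q} h => adj_same_cell.mpr h⟩ with hfdef
      exact (hihc.1.preconnected ⟨x, (hF7 i x).mp hx⟩ ⟨y, (hF7 i y).mp hy⟩).map f
    have hGoodSmall : ∀ j : Fin (tcell n m + 1), j ∉ Dc →
        (Li j).card + 1 ≤ (n + s - 2) / s + m := by
      intro j hj
      have : Li j = ∅ := by
        rw [Finset.eq_empty_iff_forall_notMem]
        intro S hS
        exact hj (by
          rw [hDcdef, ← (Finset.mem_filter.mp hS).2]
          exact Finset.mem_image_of_mem cell (Finset.mem_filter.mp hS).1)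
      rw [this]
      simpa using by omega
    -- reachability between good cells
    have HA : ∀ (i j : Fin (tcell n m + 1)), i ∉ Dc → j ∉ Dc → (i : ℕ) < (j : ℕ) →
        ∀ (x y : DCellVertex n m) hx hy, Gi.Reachable ⟨(i, x), hx⟩ ⟨(j, y), hy⟩ := by
      intro i j hi hj hij x y hx hy
      obtain ⟨a, b, hadj, -⟩ := exists_cross_adj hn0 hij
      have hma : ((i, a) : DCellVertex n (m+1)) ∈ Rc := hF6 i a hi
      have hmb : ((j, b) : DCellVertex n (m+1)) ∈ Rc := hF6 j b hj
      refine (H1 i (hGoodSmall i hi) x a hx hma).trans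
        (SimpleGraph.Reachable.trans ?_ (H1 j (hGoodSmall j hj) b y hmb hy))
      exact SimpleGraph.Adj.reachable
        (show (DCell n (m+1)).Adj (i, a) (j, b) from hadj)
    -- every surviving vertex reaches a good cell
    have HB : ∀ (u : DCellVertex n (m+1)) (hu : u ∈ Rc),
        ∃ (g : Fin (tcell n m + 1)) (y : DCellVertex n m) (hg : g ∉ Dc)
          (hy : ((g, y) : DCellVertex n (m+1)) ∈ Rc),
          Gi.Reachable ⟨u, hu⟩ ⟨(g, y), hy⟩ := by
      intro u hu
      by_cases hgood : u.1 ∈ Dc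
      case neg =>
        exact ⟨u.1, u.2, hgood, hu, SimpleGraph.Reachable.refl _⟩
      case pos =>
      by_cases hbig : ∃ j, (n + s - 2) / s + m ≤ (Li j).card
      · obtain ⟨j, hj⟩ := hbig
        have hLjL : Li j = L := Finset.eq_of_subset_of_card_le
          (Finset.filter_subset _ _) (by omega)
        have hDsub : ∀ b ∈ Dc, b = j := by
          intro b hb
          obtain ⟨S, hS, rfl⟩ := Finset.mem_image.mp hb
          have : S ∈ Li j := hLjL ▸ hS
          exact (Finset.mem_filter.mp this).2
        have hvfst : (partner hn0 u).1 ≠ u.1 := partner_fst_ne hn0 u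
        have hvg : (partner hn0 u).1 ∉ Dc := fun h =>
          hvfst (by rw [hDsub _ h, hDsub _ hgood])
        have hvRc : (((partner hn0 u).1, (partner hn0 u).2) : DCellVertex n (m+1)) ∈ Rc :=
          hF6 _ _ hvg
        exact ⟨(partner hn0 u).1, (partner hn0 u).2, hvg, hvRc,
          SimpleGraph.Adj.reachable
            (show (DCell n (m+1)).Adj u (partner hn0 u) from adj_partner hn0 u)⟩
      · push_neg at hbig
        set i := u.1 with hidef
        set Sv : Finset (DCellVertex n m) :=
          Finset.univ.filter (fun x => ∀ T ∈ Lp i, x ∉ T) with hSvdef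
        have hSvcard : tcell n m ≤ Sv.card + s * (Li i).card := by
          set NSv : Finset (DCellVertex n m) :=
            Finset.univ.filter (fun x => ¬ ∀ T ∈ Lp i, x ∉ T) with hNSvdef
          have hNSv : NSv = Finset.univ \ Sv := by
            rw [hNSvdef, hSvdef, Finset.filter_not]
          have hSvle : Sv.card ≤ tcell n m := by
            rw [← card_DCV (n := n) m, ← Finset.card_univ]
            exact Finset.card_le_univ _
          have hsplit : NSv.card = tcell n m - Sv.card := by
            rw [hNSv, Finset.card_sdiff_of_subset (Finset.subset_univ _), Finset.card_univ, card_DCV]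
          have hsub : NSv ⊆ (Lp i).biUnion id := by
            intro x hx
            rw [hNSvdef] at hx
            have := (Finset.mem_filter.mp hx).2
            push_neg at this
            obtain ⟨T, hT, hxT⟩ := this
            exact Finset.mem_biUnion.mpr ⟨T, hT, hxT⟩
          have hb1 : ((Lp i).biUnion id).card ≤ s * (Lp i).card := by
            calc ((Lp i).biUnion id).card ≤ ∑ T ∈ Lp i, (id T).card :=
              Finset.card_biUnion_le
            _ = ∑ T ∈ Lp i, s := Finset.sum_congr rfl
                (fun T hT => by simp [(hF3 i T hT).1])
            _ = (Lp i).card * s := by rw [Finset.sum_const, smul_eq_mul]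
            _ = s * (Lp i).card := by ring
          have hb2 : (Lp i).card ≤ (Li i).card := Finset.card_image_le
          have hb3 : s * (Lp i).card ≤ s * (Li i).card := Nat.mul_le_mul_left _ hb2
          have hb4 : NSv.card ≤ ((Lp i).biUnion id).card := Finset.card_le_card hsub
          omega
        have hBadcard : (Dc.erase i).card + (Li i).card ≤ L.card := by
          have hsub : Dc.erase i ⊆ (L \ Li i).image cell := by
            intro b hb
            obtain ⟨hbne, hbD⟩ := Finset.mem_erase.mp hb
            obtain ⟨S, hS, rfl⟩ := Finset.mem_image.mp hbD
            refine Finset.mem_image_of_mem cell (Finset.mem_sdiff.mpr ⟨hS, ?_⟩)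
            intro hSLi
            exact hbne (Finset.mem_filter.mp hSLi).2
          have h1 := Finset.card_le_card hsub
          have h2 := Finset.card_image_le (s := L \ Li i) (f := cell)
          have h3 : (L \ Li i).card = L.card - (Li i).card :=
            Finset.card_sdiff_of_subset (Finset.filter_subset _ _)
          have h4 : (Li i).card ≤ L.card := Finset.card_filter_le _ _
          omega
        have hexists : ∃ x' ∈ Sv, (partner hn0 ((i, x') : DCellVertex n (m+1))).1 ∉ Dc := by
          by_contra hcon
          push_neg at hcon
          have hmapsto : ∀ x' ∈ Sv,
              (partner hn0 ((i, x') : DCellVertex n (m+1))).1 ∈ Dc.erase i := by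
            intro x' hx'
            refine Finset.mem_erase.mpr ⟨?_, hcon x' hx'⟩
            exact partner_fst_ne hn0 ((i, x') : DCellVertex n (m+1))
          have hinj : Set.InjOn
              (fun x' => (partner hn0 ((i, x') : DCellVertex n (m+1))).1) ↑Sv :=
            fun a _ b _ h => partner_cell_injOn hn0 i h
          have hle := Finset.card_le_card_of_injOn _ hmapsto hinj
          -- arithmetic contradiction
          obtain ⟨e, he⟩ : ∃ e, (n + s - 2) / s + m = e + 1 := ⟨(n + s - 2) / s + m - 1, by omega⟩
          have hkeym := keym (n := n) (s := s) (by omega) (by omega) hs2 m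
          rw [he, Nat.mul_succ] at hkeym
          have haux : s * (Li i).card + e ≤ s * e + (Li i).card :=
            aux_mul_mono (by omega) (by have := hbig i; omega)
          have hka : (Li i).card ≤ L.card := Finset.card_filter_le _ _
          omega
        obtain ⟨x', hx'Sv, hx'g⟩ := hexists
        have hx'Rc : ((i, x') : DCellVertex n (m+1)) ∈ Rc :=
          (hF7 i x').mpr (by simpa [hSvdef] using (Finset.mem_filter.mp hx'Sv).2)
        have hvRc : (((partner hn0 ((i, x') : DCellVertex n (m+1))).1,
            (partner hn0 ((i, x') : DCellVertex n (m+1))).2) : DCellVertex n (m+1)) ∈ Rc :=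
          hF6 _ _ hx'g
        have hstep : Gi.Adj ⟨((i, x') : DCellVertex n (m+1)), hx'Rc⟩
            ⟨(((partner hn0 ((i, x') : DCellVertex n (m+1))).1,
              (partner hn0 ((i, x') : DCellVertex n (m+1))).2) : DCellVertex n (m+1)), hvRc⟩ :=
          adj_partner hn0 ((i, x') : DCellVertex n (m+1))
        exact ⟨_, _, hx'g, hvRc, SimpleGraph.Reachable.trans
          (H1 i (hbig i) u.2 x' hu hx'Rc) hstep.reachable⟩
    -- two good cells
    have hDccard : Dc.card ≤ L.card := Finset.card_image_le
    have htm1 : (n + s - 2) / s + m + 2 ≤ tcell n m + 1 := by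
      obtain ⟨e, he⟩ : ∃ e, (n + s - 2) / s + m = e + 1 := ⟨(n + s - 2) / s + m - 1, by omega⟩
      have hkeym := keym (n := n) (s := s) (by omega) (by omega) hs2 m
      rw [he, Nat.mul_succ] at hkeym
      have : e ≤ s * e := Nat.le_mul_of_pos_left e (by omega)
      omega
    have hGc : 2 ≤ (Finset.univ \ Dc : Finset (Fin (tcell n m + 1))).card := by
      have h1 : (Finset.univ \ Dc : Finset (Fin (tcell n m + 1))).card
          = Fintype.card (Fin (tcell n m + 1)) - Dc.card := by
        rw [Finset.card_sdiff_of_subset (Finset.subset_univ _), Finset.card_univ]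
      rw [Fintype.card_fin] at h1
      omega
    obtain ⟨g1, hg1, g2, hg2, hgne⟩ := Finset.one_lt_card.mp
      (show 1 < (Finset.univ \ Dc : Finset (Fin (tcell n m + 1))).card by omega)
    have hg1' : g1 ∉ Dc := (Finset.mem_sdiff.mp hg1).2
    have hg2' : g2 ∉ Dc := (Finset.mem_sdiff.mp hg2).2
    have hz1 : ((g1, dcvZero hn0 m) : DCellVertex n (m+1)) ∈ Rc := hF6 _ _ hg1'
    have hz2 : ((g2, dcvZero hn0 m) : DCellVertex n (m+1)) ∈ Rc := hF6 _ _ hg2'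
    refine ⟨(SimpleGraph.connected_iff _).mpr ⟨?_, ⟨⟨_, hz1⟩⟩⟩,
      (g1, dcvZero hn0 m), (g2, dcvZero hn0 m), hz1, hz2,
      fun h => hgne (congrArg Prod.fst h)⟩
    rintro ⟨u, hu⟩ ⟨v, hv⟩
    obtain ⟨gu, yu, hgu, hyu, hru⟩ := HB u hu
    obtain ⟨gv, yv, hgv, hyv, hrv⟩ := HB v hv
    refine hru.trans (SimpleGraph.Reachable.trans ?_ hrv.symm)
    rcases lt_trichotomy (gu : ℕ) (gv : ℕ) with h | h | h
    · exact HA gu gv hgu hgv h yu yv hyu hyv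
    · have hg : gu = gv := Fin.ext h
      subst hg
      exact H1 gu (hGoodSmall gu hgu) yu yv hyu hyv
    · exact (HA gv gu hgv hgu h yv yu hyv hyu).symm

end MainConn
section Bridge

variable {n s : ℕ}

/-- The subgraph on a finite clique. -/
def cliqueSub {V : Type*} (G : SimpleGraph V) (S : Finset V) : G.Subgraph where
  verts := ↑S
  Adj a b := a ∈ S ∧ b ∈ S ∧ G.Adj a b
  adj_sub h := h.2.2
  edge_vert h := h.1
  symm := ⟨fun a b h => ⟨h.2.1, h.1, h.2.2.symm⟩⟩

lemma cliqueSub_verts {V : Type*} (G : SimpleGraph V) (S : Finset V) :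
    (cliqueSub G S).verts = ↑S := rfl

lemma cliqueSub_iso {V : Type*} (G : SimpleGraph V) (S : Finset V) (hcard : S.card = s)
    (hcl : ∀ a ∈ S, ∀ b ∈ S, a ≠ b → G.Adj a b) :
    Nonempty ((cliqueSub G S).coe ≃g (⊤ : SimpleGraph (Fin s))) := by
  letI : Fintype ((cliqueSub G S).verts : Set V) := FinsetCoe.fintype S
  have hc : Fintype.card ((cliqueSub G S).verts : Set V) = s :=
    (Fintype.card_coe S).trans hcard
  refine ⟨⟨Fintype.equivFinOfCardEq hc, ?_⟩⟩
  intro a b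
  rw [SimpleGraph.top_adj]
  constructor
  · intro hne
    have hab : a ≠ b := fun h => hne (by rw [h])
    have ha : (a : V) ∈ S := a.prop
    have hb : (b : V) ∈ S := b.prop
    exact ⟨ha, hb, hcl _ ha _ hb fun h => hab (Subtype.ext h)⟩
  · intro h he
    have h' : (a : V) ∈ S ∧ (b : V) ∈ S ∧ G.Adj a b := h
    exact h'.2.2.ne (congrArg Subtype.val ((Fintype.equivFinOfCardEq hc).injective he))

lemma lower_bound (hn : 4 ≤ n) (hs1 : 3 ≤ s) (hs2 : s + 1 ≤ n) (m : ℕ)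
    (F : Finset (DCell n m).Subgraph)
    (hcut : (DCell n m).IsStructureCut (⊤ : SimpleGraph (Fin s)) F) :
    (n + s - 2) / s + m ≤ F.card := by
  classical
  by_contra hcon
  push_neg at hcon
  set L : Finset (Finset (DCellVertex n m)) :=
    F.image (fun A => (Set.toFinite A.verts).toFinset) with hLdef
  have hmemL : ∀ v : DCellVertex n m, (∀ S ∈ L, v ∉ S) ↔ (∀ A ∈ F, v ∉ A.verts) := by
    intro v
    constructor
    · intro h A hA hv
      exact h _ (Finset.mem_image_of_mem _ hA) ((Set.toFinite A.verts).mem_toFinset.mpr hv)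
    · intro h S hS hv
      obtain ⟨A, hA, rfl⟩ := Finset.mem_image.mp hS
      exact h A hA ((Set.toFinite A.verts).mem_toFinset.mp hv)
  have hL : ∀ S ∈ L, S.card = s ∧ ∀ a ∈ S, ∀ b ∈ S, a ≠ b → (DCell n m).Adj a b := by
    intro S hS
    obtain ⟨A, hA, rfl⟩ := Finset.mem_image.mp hS
    obtain ⟨e⟩ := hcut.2 A hA
    constructor
    · rw [Set.Finite.card_toFinset]
      rw [← Fintype.card_fin s]
      exact Fintype.card_congr e.toEquiv
    · intro a ha b hb hab
      have ha' : a ∈ A.verts := (Set.toFinite A.verts).mem_toFinset.mp ha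
      have hb' : b ∈ A.verts := (Set.toFinite A.verts).mem_toFinset.mp hb
      have hne : (⟨a, ha'⟩ : A.verts) ≠ ⟨b, hb'⟩ := fun h => hab (congrArg Subtype.val h)
      have : A.coe.Adj ⟨a, ha'⟩ ⟨b, hb'⟩ := by
        rw [← e.map_rel_iff]
        rw [SimpleGraph.top_adj]
        exact fun h => hne (e.injective h)
      exact A.adj_sub this
  have hcard : L.card + 1 ≤ (n + s - 2) / s + m := by
    have h1 : L.card ≤ F.card := by
      rw [hLdef]; exact Finset.card_image_le
    omega
  obtain ⟨hconn, a, b, ha, hb, hab⟩ := main_conn hn hs1 hs2 m L hL hcard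
  have hset : (SimpleGraph.cutVerts F)ᶜ = {v : DCellVertex n m | ∀ S ∈ L, v ∉ S} := by
    ext v
    simp only [Set.mem_compl_iff, SimpleGraph.cutVerts, Set.mem_iUnion, not_exists,
      Set.mem_setOf_eq]
    rw [hmemL v]
  rcases hcut.1 with h | h
  · rw [hset] at h
    exact h hconn
  · rw [hset] at h
    exact hab (h ha hb)

end Bridge
section Embeds

variable {n : ℕ}

def embed0 : ∀ m, Fin n → DCellVertex n m
  | 0, x => x
  | m+1, x => (⟨0, by omega⟩, embed0 m x)

lemma embed0_inj : ∀ m (x y : Fin n), embed0 m x = embed0 m y → x = y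
  | 0, _, _, h => h
  | m+1, x, y, h => embed0_inj m x y (congrArg Prod.snd h)

lemma code_embed0 : ∀ m (x : Fin n), DCellCode n m (embed0 m x) = x.val
  | 0, _ => rfl
  | m+1, x => by
    show DCellCode n m (embed0 m x) + (⟨0, by omega⟩ : Fin (tcell n m + 1)).val * tcell n m = x.val
    rw [code_embed0 m x]
    simp

lemma adj_embed0 : ∀ m (x y : Fin n), x ≠ y → (DCell n m).Adj (embed0 m x) (embed0 m y)
  | 0, x, y, h => by
    show (⊤ : SimpleGraph (Fin n)).Adj x y
    simpa using h
  | m+1, x, y, h => adj_same_cell.mpr (adj_embed0 m x y h)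

def embedW (hn : 0 < n) : ∀ (m j : ℕ), Fin n → DCellVertex n m
  | 0, _, x => x
  | m+1, 0, x => (⟨1, by have := tcell_pos hn m; omega⟩, embed0 m x)
  | m+1, j+1, x => (⟨0, by omega⟩, embedW hn m j x)

lemma embedW_ne_embed0 (hn : 0 < n) : ∀ m j, j < m → ∀ (x y : Fin n),
    embedW hn m j x ≠ embed0 m y
  | 0, j, hj, _, _ => absurd hj (by omega)
  | m+1, 0, hj, x, y => by
    intro h
    have h1 := congrArg (fun p : DCellVertex n (m+1) => (p.1 : ℕ)) h
    simp [embedW, embed0] at h1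
  | m+1, j+1, hj, x, y => fun h =>
    embedW_ne_embed0 hn m j (by omega) x y (congrArg Prod.snd h)

lemma embedW_inj (hn : 0 < n) : ∀ m j j', j < m → j' < m → ∀ (x x' : Fin n),
    embedW hn m j x = embedW hn m j' x' → j = j' ∧ x = x'
  | 0, j, j', hj, hj', _, _, _ => absurd hj (by omega)
  | m+1, 0, 0, hj, hj', x, x', h => ⟨rfl, embed0_inj m x x' (congrArg Prod.snd h)⟩
  | m+1, 0, j'+1, hj, hj', x, x', h => by
    have h1 := congrArg (fun p : DCellVertex n (m+1) => (p.1 : ℕ)) h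
    simp [embedW] at h1
  | m+1, j+1, 0, hj, hj', x, x', h => by
    have h1 := congrArg (fun p : DCellVertex n (m+1) => (p.1 : ℕ)) h
    simp [embedW] at h1
  | m+1, j+1, j'+1, hj, hj', x, x', h => by
    obtain ⟨h1, h2⟩ := embedW_inj hn m j j' (by omega) (by omega) x x'
      (congrArg Prod.snd h)
    exact ⟨by omega, h2⟩

lemma adj_embedW (hn : 0 < n) : ∀ m j, j < m → ∀ (x y : Fin n), x ≠ y →
    (DCell n m).Adj (embedW hn m j x) (embedW hn m j y)
  | 0, j, hj, _, _, _ => absurd hj (by omega)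
  | m+1, 0, hj, x, y, hxy => adj_same_cell.mpr (adj_embed0 m x y hxy)
  | m+1, j+1, hj, x, y, hxy =>
    adj_same_cell.mpr (adj_embedW hn m j (by omega) x y hxy)

lemma decode_zero_eq (hn : 0 < n) (m : ℕ) : decode hn m 0 = embed0 m ⟨0, hn⟩ :=
  code_inj m _ _ hn (by rw [code_decode hn m 0 (tcell_pos hn m), code_embed0])

lemma nbr_z (hn : 0 < n) : ∀ m (v : DCellVertex n m),
    (DCell n m).Adj (embed0 m ⟨0, hn⟩) v →
    (∃ x : Fin n, x ≠ ⟨0, hn⟩ ∧ v = embed0 m x) ∨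
      (∃ j, j < m ∧ v = embedW hn m j ⟨0, hn⟩)
  | 0, v, h => by
    refine Or.inl ⟨v, ?_, rfl⟩
    have h' : (⊤ : SimpleGraph (Fin n)).Adj (⟨0, hn⟩ : Fin n) v := h
    exact h'.ne.symm
  | m+1, v, h => by
    by_cases hfst : v.1 = (⟨0, by omega⟩ : Fin (tcell n m + 1))
    · have hv : v = ((⟨0, by omega⟩, v.2) : DCellVertex n (m+1)) := Prod.ext hfst rfl
      rw [hv] at h
      have h2 : (DCell n m).Adj (embed0 m ⟨0, hn⟩) v.2 := adj_same_cell.mp h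
      rcases nbr_z hn m v.2 h2 with ⟨x, hx, he⟩ | ⟨j, hj, he⟩
      · exact Or.inl ⟨x, hx, Prod.ext hfst he⟩
      · exact Or.inr ⟨j+1, by omega, Prod.ext hfst he⟩
    · have hv : v = partner hn (embed0 (m+1) ⟨0, hn⟩) :=
        cross_eq_partner hn h hfst
      have hle : ((embed0 (m+1) (⟨0, hn⟩ : Fin n)).1 : ℕ) ≤
          DCellCode n m (embed0 (m+1) (⟨0, hn⟩ : Fin n)).2 := Nat.zero_le _
      have hpz : partner hn (embed0 (m+1) ⟨0, hn⟩) = embedW hn (m+1) 0 ⟨0, hn⟩ := by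
        rw [partner_pos hn (embed0 (m+1) ⟨0, hn⟩) hle]
        refine Prod.ext (Fin.ext ?_) ?_
        · show DCellCode n m (embed0 m ⟨0, hn⟩) + 1 = 1
          rw [code_embed0]
        · show decode hn m ((embed0 (m+1) (⟨0, hn⟩ : Fin n)).1 : ℕ) = embed0 m ⟨0, hn⟩
          have : ((embed0 (m+1) (⟨0, hn⟩ : Fin n)).1 : ℕ) = 0 := rfl
          rw [this]
          exact decode_zero_eq hn m
      exact Or.inr ⟨0, by omega, by rw [hv, hpz]⟩

end Embeds
section Cover

def Acov (n s r : ℕ) (hsn : s < n) : Finset (Fin n) :=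
  (Finset.univ : Finset (Fin s)).image
    (fun t => ⟨min (r * s) (n - 1 - s) + t.val + 1, by
      have h1 : min (r * s) (n - 1 - s) ≤ n - 1 - s := Nat.min_le_right _ _
      have h2 : t.val < s := t.2
      omega⟩)

variable {n s : ℕ}

lemma Acov_card (hsn : s < n) (r : ℕ) : (Acov n s r hsn).card = s := by
  rw [Acov, Finset.card_image_of_injective _ (fun t t' h => by
    have := congrArg Fin.val h
    simp only at this
    exact Fin.ext (by omega)), Finset.card_univ, Fintype.card_fin]

lemma Acov_mem (hsn : s < n) (r : ℕ) (x : Fin n) :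
    x ∈ Acov n s r hsn ↔ ∃ t, t < s ∧ x.val = min (r * s) (n - 1 - s) + t + 1 := by
  rw [Acov, Finset.mem_image]
  constructor
  · rintro ⟨t, -, rfl⟩
    exact ⟨t.val, t.2, rfl⟩
  · rintro ⟨t, ht, hx⟩
    exact ⟨⟨t, ht⟩, Finset.mem_univ _, Fin.ext hx.symm⟩

lemma Acov_zero_not_mem (hsn : s < n) (r : ℕ) (hn : 0 < n) :
    (⟨0, hn⟩ : Fin n) ∉ Acov n s r hsn := by
  rw [Acov_mem]
  rintro ⟨t, ht, hx⟩
  simp at hx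

lemma Acov_cover (hn : 2 ≤ n) (hs1 : 1 ≤ s) (hsn : s < n) (x : Fin n) (hx : 1 ≤ x.val) :
    ∃ r, r < (n + s - 2) / s ∧ x ∈ Acov n s r hsn := by
  have hdm := Nat.div_add_mod (x.val - 1) s
  have hmod : (x.val - 1) % s < s := Nat.mod_lt _ (by omega)
  have hcomm : s * ((x.val - 1) / s) = ((x.val - 1) / s) * s := Nat.mul_comm _ _
  have hXle : x.val - 1 ≤ n - 2 := by have := x.2; omega
  refine ⟨(x.val - 1) / s, ?_, ?_⟩
  · have h2 : ((x.val - 1) / s + 1) * s = ((x.val - 1) / s) * s + s := by ring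
    have h1 : ((x.val - 1) / s + 1) * s ≤ n + s - 2 := by omega
    exact (Nat.le_div_iff_mul_le (by omega : 0 < s)).mpr h1
  · rw [Acov_mem]
    rcases Nat.le_total (((x.val - 1) / s) * s) (n - 1 - s) with hc | hc
    · rw [Nat.min_eq_left hc]
      exact ⟨x.val - 1 - ((x.val - 1) / s) * s, by omega, by omega⟩
    · rw [Nat.min_eq_right hc]
      exact ⟨x.val - 1 - (n - 1 - s), by omega, by omega⟩

lemma Acov_mono (hn : 2 ≤ n) (hs1 : 1 ≤ s) (hsn : s < n) {r r' : ℕ} (hrr : r < r')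
    (hr' : r' < (n + s - 2) / s) :
    min (r * s) (n - 1 - s) < min (r' * s) (n - 1 - s) := by
  have hkey := key0 (n := n) (s := s) (by omega)
  have h1 : (r + 2) * s ≤ ((n + s - 2) / s) * s :=
    Nat.mul_le_mul_right s (by omega)
  have h2 : (r + 2) * s = r * s + 2 * s := by ring
  have h3 : ((n + s - 2) / s) * s = s * ((n + s - 2) / s) := by ring
  have h4 : (r + 1) * s ≤ r' * s := Nat.mul_le_mul_right s (by omega)
  have h5 : (r + 1) * s = r * s + s := by ring
  have h6 : r * s ≤ n - 1 - s := by omega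
  rw [Nat.min_eq_left h6]
  exact lt_min (by omega) (by omega)

lemma Acov_ne (hn : 2 ≤ n) (hs1 : 1 ≤ s) (hsn : s < n) {r r' : ℕ} (hrr : r < r')
    (hr' : r' < (n + s - 2) / s) : Acov n s r hsn ≠ Acov n s r' hsn := by
  intro he
  have hmono := Acov_mono hn hs1 hsn hrr hr'
  have hmem : (⟨min (r' * s) (n - 1 - s) + (s - 1) + 1, by
      have := Nat.min_le_right (r' * s) (n - 1 - s); omega⟩ : Fin n) ∈ Acov n s r' hsn := by
    rw [Acov_mem]
    exact ⟨s - 1, by omega, rfl⟩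
  rw [← he] at hmem
  rw [Acov_mem] at hmem
  obtain ⟨t, ht, hv⟩ := hmem
  simp only at hv
  omega

end Cover
lemma reachable_ne_adj {V : Type*} {G : SimpleGraph V} {u v : V} (h : G.Reachable u v)
    (hne : u ≠ v) : ∃ x, G.Adj u x := by
  obtain ⟨p⟩ := h
  cases p with
  | nil => exact absurd rfl hne
  | cons h _ => exact ⟨_, h⟩

section UpperBound

variable {n s : ℕ}

lemma upper_bound (hn : 4 ≤ n) (hs1 : 3 ≤ s) (hs2 : s + 1 ≤ n) (m : ℕ) :
    ∃ F : Finset (DCell n m).Subgraph,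
      (DCell n m).IsStructureCut (⊤ : SimpleGraph (Fin s)) F ∧
      F.card = (n + s - 2) / s + m := by
  classical
  have hn0 : 0 < n := by omega
  have hsn : s < n := by omega
  have hc1 : 1 ≤ (n + s - 2) / s := c_pos (by omega) (by omega)
  have hinj0 : Function.Injective (embed0 (n := n) m) := fun x y h => embed0_inj m x y h
  set Zf : ℕ → (DCell n m).Subgraph :=
    fun r => cliqueSub (DCell n m) ((Acov n s r hsn).image (embed0 m)) with hZf
  set Wf : ℕ → (DCell n m).Subgraph :=
    fun j => cliqueSub (DCell n m)
      ((Finset.univ : Finset (Fin s)).image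
        (fun t => embedW hn0 m j ⟨t.val, lt_trans t.2 hsn⟩)) with hWf
  set F := (Finset.range ((n + s - 2) / s)).image Zf ∪ (Finset.range m).image Wf with hF
  -- verts membership
  have hZv : ∀ (r : ℕ) (v : DCellVertex n m),
      v ∈ (Zf r).verts ↔ ∃ x ∈ Acov n s r hsn, embed0 m x = v := by
    intro r v
    show v ∈ ((Acov n s r hsn).image (embed0 m) : Finset _) ↔ _
    rw [Finset.mem_image]
  have hWv : ∀ (j : ℕ) (v : DCellVertex n m),
      v ∈ (Wf j).verts ↔ ∃ t : Fin s, embedW hn0 m j ⟨t.val, lt_trans t.2 hsn⟩ = v := by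
    intro j v
    show v ∈ (Finset.univ.image (fun t : Fin s =>
      embedW hn0 m j ⟨t.val, lt_trans t.2 hsn⟩) : Finset _) ↔ _
    rw [Finset.mem_image]
    simp
  have hmemF : ∀ A ∈ F, (∃ r, r < (n + s - 2) / s ∧ A = Zf r) ∨
      (∃ j, j < m ∧ A = Wf j) := by
    intro A hA
    rw [hF, Finset.mem_union] at hA
    rcases hA with hA | hA
    · obtain ⟨r, hr, rfl⟩ := Finset.mem_image.mp hA
      exact Or.inl ⟨r, Finset.mem_range.mp hr, rfl⟩
    · obtain ⟨j, hj, rfl⟩ := Finset.mem_image.mp hA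
      exact Or.inr ⟨j, Finset.mem_range.mp hj, rfl⟩
  -- z is not removed
  have hzF : ∀ A ∈ F, embed0 m (⟨0, hn0⟩ : Fin n) ∉ A.verts := by
    intro A hA hz
    rcases hmemF A hA with ⟨r, hr, rfl⟩ | ⟨j, hj, rfl⟩
    · obtain ⟨x, hx, he⟩ := (hZv r _).mp hz
      rw [hinj0 he] at hx
      exact Acov_zero_not_mem hsn r hn0 hx
    · obtain ⟨t, he⟩ := (hWv j _).mp hz
      exact embedW_ne_embed0 hn0 m j hj _ _ he
  have hcut : ∀ v, v ∈ (SimpleGraph.cutVerts F) ↔ ∃ A ∈ F, v ∈ A.verts := by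
    intro v
    simp [SimpleGraph.cutVerts]
  refine ⟨F, ⟨?_, ?_⟩, ?_⟩
  · -- subgraph cut
    cases m with
    | zero =>
      right
      intro a ha b hb
      have hzero : ∀ v : DCellVertex n 0, v ∈ (SimpleGraph.cutVerts F)ᶜ →
          v = (⟨0, hn0⟩ : Fin n) := by
        intro v hv
        by_contra hne
        have hval : 1 ≤ (Fin.val v) := by
          rcases Nat.eq_zero_or_pos (Fin.val v) with h0 | h1
          · exact absurd (Fin.ext h0) hne
          · exact h1
        obtain ⟨r, hr, hmem⟩ := Acov_cover (by omega) (by omega) hsn v hval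
        refine hv ((hcut v).mpr ⟨Zf r, ?_, ?_⟩)
        · rw [hF]
          exact Finset.mem_union_left _
            (Finset.mem_image_of_mem Zf (Finset.mem_range.mpr hr))
        · exact (hZv r v).mpr ⟨v, hmem, rfl⟩
      rw [hzero a ha, hzero b hb]
    | succ m' =>
      left
      intro hconn
      have hzc : embed0 (n := n) (m'+1) ⟨0, hn0⟩ ∈ (SimpleGraph.cutVerts F)ᶜ := by
        intro hmem
        obtain ⟨A, hA, hv⟩ := (hcut _).mp hmem
        exact hzF A hA hv
      have hwc : embedW hn0 (m'+1) 0 ⟨s, hsn⟩ ∈ (SimpleGraph.cutVerts F)ᶜ := by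
        intro hmem
        obtain ⟨A, hA, hv⟩ := (hcut _).mp hmem
        rcases hmemF A hA with ⟨r, hr, rfl⟩ | ⟨j, hj, rfl⟩
        · obtain ⟨x, hx, he⟩ := (hZv r _).mp hv
          exact embedW_ne_embed0 hn0 (m'+1) 0 (by omega) _ _ he.symm
        · obtain ⟨t, ht⟩ := (hWv j _).mp hv
          have h2 := embedW_inj hn0 (m'+1) j 0 hj (by omega) _ _ ht
          have hval : t.val = s := by
            have := congrArg Fin.val h2.2
            simpa using this
          have := t.2
          omega
      have hzw : embed0 (n := n) (m'+1) ⟨0, hn0⟩ ≠ embedW hn0 (m'+1) 0 ⟨s, hsn⟩ :=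
        fun h => embedW_ne_embed0 hn0 (m'+1) 0 (by omega) _ _ h.symm
      have hreach := hconn.preconnected ⟨_, hzc⟩ ⟨_, hwc⟩
      obtain ⟨x, hadj⟩ := reachable_ne_adj hreach
        (fun h => hzw (congrArg Subtype.val h))
      have hadj' : (DCell n (m'+1)).Adj (embed0 (m'+1) ⟨0, hn0⟩) x.val := hadj
      rcases nbr_z hn0 (m'+1) x.val hadj' with ⟨y, hy, hxe⟩ | ⟨j, hj, hxe⟩
      · have hval : 1 ≤ Fin.val y := by
          rcases Nat.eq_zero_or_pos (Fin.val y) with h0 | h1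
          · exact absurd (Fin.ext h0) hy
          · exact h1
        obtain ⟨r, hr, hmem⟩ := Acov_cover (by omega) (by omega) hsn y hval
        refine x.prop ((hcut _).mpr ⟨Zf r, ?_, (hZv r _).mpr ⟨y, hmem, hxe.symm⟩⟩)
        rw [hF]
        exact Finset.mem_union_left _
          (Finset.mem_image_of_mem Zf (Finset.mem_range.mpr hr))
      · refine x.prop ((hcut _).mpr ⟨Wf j, ?_, (hWv j _).mpr ⟨⟨0, by omega⟩, hxe.symm⟩⟩)
        rw [hF]
        exact Finset.mem_union_right _
          (Finset.mem_image_of_mem Wf (Finset.mem_range.mpr hj))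
  · -- members isomorphic to K_s
    intro A hA
    rcases hmemF A hA with ⟨r, hr, rfl⟩ | ⟨j, hj, rfl⟩
    · refine cliqueSub_iso _ _ ?_ ?_
      · rw [Finset.card_image_of_injective _ hinj0, Acov_card]
      · intro a ha b hb hab
        obtain ⟨x, hx, rfl⟩ := Finset.mem_image.mp ha
        obtain ⟨y, hy, rfl⟩ := Finset.mem_image.mp hb
        exact adj_embed0 m x y (fun h => hab (by rw [h]))
    · refine cliqueSub_iso _ _ ?_ ?_
      · rw [Finset.card_image_of_injective, Finset.card_univ, Fintype.card_fin]
        intro t t' h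
        have h2 := (embedW_inj hn0 m j j hj hj _ _ h).2
        have h3 : t.val = t'.val := by
          have := congrArg Fin.val h2
          simpa using this
        exact Fin.ext h3
      · intro a ha b hb hab
        obtain ⟨t, -, rfl⟩ := Finset.mem_image.mp ha
        obtain ⟨t', -, rfl⟩ := Finset.mem_image.mp hb
        refine adj_embedW hn0 m j hj _ _ (fun h => hab (by rw [h]))
  · -- cardinality
    have hinjZ : Set.InjOn Zf ↑(Finset.range ((n + s - 2) / s)) := by
      intro r hr r' hr' he
      by_contra hne
      have hv := congrArg SimpleGraph.Subgraph.verts he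
      have hAe : (Acov n s r hsn).image (embed0 m) = (Acov n s r' hsn).image (embed0 m) :=
        Finset.coe_injective hv
      have : Acov n s r hsn = Acov n s r' hsn := Finset.image_injective hinj0 hAe
      rcases lt_trichotomy r r' with h | h | h
      · exact Acov_ne (by omega) (by omega) hsn h (Finset.mem_coe.mp hr' |> Finset.mem_range.mp) this
      · exact hne h
      · exact Acov_ne (by omega) (by omega) hsn h (Finset.mem_coe.mp hr |> Finset.mem_range.mp) this.symm
    have hinjW : Set.InjOn Wf ↑(Finset.range m) := by
      intro j hj j' hj' he
      have hjm := Finset.mem_range.mp (Finset.mem_coe.mp hj)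
      have hjm' := Finset.mem_range.mp (Finset.mem_coe.mp hj')
      have hv := congrArg SimpleGraph.Subgraph.verts he
      have hmem : embedW hn0 m j (⟨(⟨0, by omega⟩ : Fin s).val,
          lt_trans (⟨0, by omega⟩ : Fin s).2 hsn⟩ : Fin n) ∈ (Wf j').verts := by
        rw [← hv]
        rw [hZf] at *
        exact (hWv j _).mpr ⟨⟨0, by omega⟩, rfl⟩
      obtain ⟨t, ht⟩ := (hWv j' _).mp hmem
      exact ((embedW_inj hn0 m j' j hjm' hjm _ _ ht).1).symm
    have hdisj : Disjoint ((Finset.range ((n + s - 2) / s)).image Zf)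
        ((Finset.range m).image Wf) := by
      rw [Finset.disjoint_left]
      intro A hAZ hAW
      obtain ⟨r, hr, rfl⟩ := Finset.mem_image.mp hAZ
      obtain ⟨j, hj, he⟩ := Finset.mem_image.mp hAW
      have hjm := Finset.mem_range.mp hj
      have hx0 : (⟨0, hn0⟩ : Fin n) ∈ Acov n s 0 hsn ∨ True := Or.inr trivial
      -- pick an element of Acov r
      have hne : (Acov n s r hsn).Nonempty := by
        rw [← Finset.card_pos, Acov_card]; omega
      obtain ⟨x, hx⟩ := hne
      have hmem : embed0 m x ∈ (Zf r).verts := (hZv r _).mpr ⟨x, hx, rfl⟩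
      rw [← he] at hmem
      obtain ⟨t, ht⟩ := (hWv j _).mp hmem
      exact embedW_ne_embed0 hn0 m j hjm _ _ ht
    rw [hF, Finset.card_union_of_disjoint hdisj, Finset.card_image_of_injOn hinjZ,
      Finset.card_image_of_injOn hinjW, Finset.card_range, Finset.card_range]

end UpperBound
/-- For all integers `m ≥ 0`, `n ≥ 2` and `3 ≤ s ≤ n - 1`,
`κ(D_{m,n}; K_s) = ⌈(n-1)/s⌉ + m`. -/
theorem dcell_complete_structConn_eq (m n s : ℕ) (hn : 2 ≤ n) (hs1 : 3 ≤ s)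
    (hs2 : s ≤ n - 1) :
    (DCell n m).structConn (⊤ : SimpleGraph (Fin s)) = (n + s - 2) / s + m := by
  have hn4 : 4 ≤ n := by omega
  have hs2' : s + 1 ≤ n := by omega
  obtain ⟨F0, hF0, hF0c⟩ := upper_bound hn4 hs1 hs2' m
  have hmem : ((n + s - 2) / s + m) ∈
      {k | ∃ F : Finset (DCell n m).Subgraph,
        (DCell n m).IsStructureCut (⊤ : SimpleGraph (Fin s)) F ∧ F.card = k} :=
    ⟨F0, hF0, hF0c⟩
  rw [SimpleGraph.structConn]
  apply le_antisymm
  · exact Nat.sInf_le hmem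
  · obtain ⟨F', hF', hc'⟩ := Nat.sInf_mem (⟨_, hmem⟩ : Set.Nonempty _)
    rw [← hc']
    exact lower_bound hn4 hs1 hs2' m F' hF'
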